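/- Let I be a set, X a nonempty set, and A a complete ortholattice. On A^{X^I} with pointwise ortholattice operations and (∇̂_J f)(x⃗) = ⋁{f(y⃗) : x⃗(i) = y⃗(i) for all i ∈ I∖J}, the family (∇̂_J)_{J⊆I} satisfies ∇̂_∅ f = f and ∇̂_{J∪K} f = ∇̂_J(∇̂_K f) for all nonempty J, K ⊆ I, and each ∇̂_J is a quantifier; hence the full functional σ-free polyadic ortholattice is a σ-free polyadic ortholattice. -/
import Mathlib


structure IsOrtho {A : Type*} [Lattice A] [BoundedOrder A] (c : A → A) : Prop where
  inf_compl : ∀ a : A, a ⊓ c a = ⊥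
  sup_compl : ∀ a : A, a ⊔ c a = ⊤
  anti : ∀ a b : A, a ≤ b → c b ≤ c a
  invol : ∀ a : A, c (c a) = a

structure IsQuant {A : Type*} [Lattice A] [BoundedOrder A] (c : A → A) (E : A → A) : Prop where
  sup : ∀ a b : A, E (a ⊔ b) = E a ⊔ E b
  bot : E ⊥ = ⊥
  idem : ∀ a : A, E (E a) = E a
  le : ∀ a : A, a ≤ E a
  closed_compl : ∀ a : A, E (c (E a)) = c (E a)

theorem full_functional_polyadic {I X : Type*} [Nonempty X]
    {A : Type*} [CompleteLattice A] (c : A → A) (hO : IsOrtho c) :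
    let Nhat : Set I → ((I → X) → A) → ((I → X) → A) :=
      fun J f x => ⨆ y ∈ {y : I → X | ∀ i ∉ J, x i = y i}, f y
    (∀ f : (I → X) → A, Nhat ∅ f = f) ∧
    (∀ J K : Set I, J.Nonempty → K.Nonempty →
      ∀ f : (I → X) → A, Nhat (J ∪ K) f = Nhat J (Nhat K f)) ∧
    (∀ J : Set I, IsQuant (A := (I → X) → A) (fun f x => c (f x)) (Nhat J)) := by
  classical
  intro Nhat
  have key : ∀ (J : Set I) (f : (I → X) → A) (x y : I → X),
      (∀ i ∉ J, x i = y i) → Nhat J f x = Nhat J f y := by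
    intro J f x y hxy
    have hS : {z : I → X | ∀ i ∉ J, x i = z i} = {z : I → X | ∀ i ∉ J, y i = z i} := by
      ext z
      constructor <;> intro hz i hi
      · rw [← hxy i hi]; exact hz i hi
      · rw [hxy i hi]; exact hz i hi
    simp only [Nhat, hS]
  refine ⟨?_, ?_, ?_⟩
  · intro f
    funext x
    have hS : {y : I → X | ∀ i ∉ (∅ : Set I), x i = y i} = {x} := by
      ext y
      simp only [Set.mem_setOf_eq, Set.notMem_empty, not_false_iff, forall_true_left,
        Set.mem_singleton_iff]
      constructor
      · intro h; exact (funext fun i => (h i).symm)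
      · intro h i; rw [h]
    simp only [Nhat, hS, iSup_singleton]
  · intro J K _ _ f
    funext x
    apply le_antisymm
    · refine iSup₂_le fun y hy => ?_
      set z : I → X := fun i => if i ∈ J then y i else x i with hzdef
      have hz1 : ∀ i ∉ J, x i = z i := by
        intro i hi; simp [hzdef, hi]
      have hz2 : ∀ i ∉ K, z i = y i := by
        intro i hi
        by_cases hiJ : i ∈ J
        · simp [hzdef, hiJ]
        · have : x i = y i := hy i (by simp [hiJ, hi])
          simp [hzdef, hiJ, this]
      have h1 : f y ≤ Nhat K f z := le_iSup₂ (f := fun y _ => f y) y hz2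
      have h2 : Nhat K f z ≤ Nhat J (Nhat K f) x :=
        le_iSup₂ (f := fun z _ => Nhat K f z) z hz1
      exact h1.trans h2
    · refine iSup₂_le fun z hz => iSup₂_le fun y hy => ?_
      refine le_iSup₂ (f := fun y _ => f y) y ?_
      intro i hi
      have hiJ : i ∉ J := fun h => hi (Or.inl h)
      have hiK : i ∉ K := fun h => hi (Or.inr h)
      rw [hz i hiJ, hy i hiK]
  · intro J
    refine ⟨?_, ?_, ?_, ?_, ?_⟩
    · intro f g
      funext x
      simp only [Nhat, Pi.sup_apply, iSup_sup_eq]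
    · funext x
      simp only [Nhat, Pi.bot_apply, iSup_bot]
    · intro f
      funext x
      apply le_antisymm
      · exact iSup₂_le fun z hz => (key J f x z hz).ge
      · exact le_iSup₂ (f := fun z _ => Nhat J f z) x (fun _ _ => rfl)
    · intro f x
      exact le_iSup₂ (f := fun y _ => f y) x (fun _ _ => rfl)
    · intro f
      funext x
      apply le_antisymm
      · refine iSup₂_le fun y hy => ?_
        rw [key J f x y hy]
      · exact le_iSup₂ (f := fun y _ => c (Nhat J f y)) x (fun _ _ => rfl)
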